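/- For angles φ₁, φ₂ ∈ [-φₘ, φₘ] with 0 < φₘ ≤ π/18, the upper bound (cos(δ)-1)·cos²(φₘ) + 1 on A = cos(δ)cos(φ₁)cos(φ₂) + sin(φ₁)sin(φ₂) is attained exactly when φ₁ = φ₂ and |φ₁| = φₘ, provided cos(δ) < 1; when cos(δ) = 1 the maximum value 1 is attained whenever φ₁ = φ₂. -/
import Mathlib


open Real

theorem length_constraint_max_attainment
    (φm φ1 φ2 δ : ℝ) (hφm : 0 < φm) (hφm' : φm ≤ π / 18)
    (h1 : φ1 ∈ Set.Icc (-φm) φm) (h2 : φ2 ∈ Set.Icc (-φm) φm) :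
    (cos δ < 1 →
      (cos δ * cos φ1 * cos φ2 + sin φ1 * sin φ2 = (cos δ - 1) * (cos φm) ^ 2 + 1 ↔
        φ1 = φ2 ∧ |φ1| = φm)) ∧
    (cos δ = 1 → φ1 = φ2 →
      cos δ * cos φ1 * cos φ2 + sin φ1 * sin φ2 = 1) := by
  have hπ : (0:ℝ) < π := Real.pi_pos
  obtain ⟨h1l, h1r⟩ := h1
  obtain ⟨h2l, h2r⟩ := h2
  have hφm2 : φm < π / 2 := by linarith
  have habs1 : |φ1| ≤ φm := abs_le.mpr ⟨h1l, h1r⟩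
  have habs2 : |φ2| ≤ φm := abs_le.mpr ⟨h2l, h2r⟩
  have hc1 : cos φm ≤ cos φ1 := by
    rw [← Real.cos_abs φ1]
    exact Real.cos_le_cos_of_nonneg_of_le_pi (abs_nonneg _) (by linarith) habs1
  have hc2 : cos φm ≤ cos φ2 := by
    rw [← Real.cos_abs φ2]
    exact Real.cos_le_cos_of_nonneg_of_le_pi (abs_nonneg _) (by linarith) habs2
  have hcm : 0 < cos φm := Real.cos_pos_of_mem_Ioo ⟨by linarith, hφm2⟩
  have key : (cos δ - 1) * (cos φm) ^ 2 + 1 - (cos δ * cos φ1 * cos φ2 + sin φ1 * sin φ2)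
      = (1 - cos (φ1 - φ2)) + (1 - cos δ) * (cos φ1 * cos φ2 - (cos φm) ^ 2) := by
    rw [Real.cos_sub]; ring
  have hA : 0 ≤ 1 - cos (φ1 - φ2) := by
    have := Real.cos_le_one (φ1 - φ2); linarith
  have hδ1 : cos δ ≤ 1 := Real.cos_le_one δ
  have hB : 0 ≤ (1 - cos δ) * (cos φ1 * cos φ2 - (cos φm) ^ 2) := by
    have h : (cos φm) ^ 2 ≤ cos φ1 * cos φ2 := by nlinarith
    nlinarith
  constructor
  · intro hδ
    constructor
    · intro heq
      have hz : 1 - cos (φ1 - φ2) = 0 ∧ (1 - cos δ) * (cos φ1 * cos φ2 - (cos φm) ^ 2) = 0 := by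
        constructor <;> linarith [key, hA, hB]
      have hcos1 : cos (φ1 - φ2) = 1 := by linarith [hz.1]
      have heq12 : φ1 = φ2 := by
        have hrange : -(2 * π) < φ1 - φ2 ∧ φ1 - φ2 < 2 * π := by
          constructor <;> nlinarith
        have := (Real.cos_eq_one_iff_of_lt_of_lt hrange.1 hrange.2).mp hcos1
        linarith
      refine ⟨heq12, ?_⟩
      have hprod : cos φ1 * cos φ2 = (cos φm) ^ 2 := by
        rcases mul_eq_zero.mp hz.2 with h | h
        · linarith
        · linarith
      have hcc : cos φ1 = cos φm := by
        rw [← heq12] at hprod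
        have hfac : (cos φ1 - cos φm) * (cos φ1 + cos φm) = 0 := by
          linear_combination hprod
        rcases mul_eq_zero.mp hfac with h | h
        · linarith
        · linarith
      have : cos |φ1| = cos φm := by rw [Real.cos_abs]; exact hcc
      exact Real.injOn_cos ⟨abs_nonneg _, by linarith⟩ ⟨le_of_lt hφm, by linarith⟩ this
    · rintro ⟨heq12, habs⟩
      have hcc : cos φ1 = cos φm := by rw [← habs, Real.cos_abs]
      have hss : sin φ1 * sin φ1 = 1 - (cos φm) ^ 2 := by
        linear_combination Real.sin_sq_add_cos_sq φ1 - (cos φ1 + cos φm) * hcc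
      rw [← heq12, hcc]
      linear_combination hss
  · intro hδ heq12
    rw [← heq12, hδ]
    linear_combination Real.sin_sq_add_cos_sq φ1
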